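/- For all a, b > 0 with a ≠ b, G/L < (2/(1 + A/G))^{2/3} < ((1 + G/A)/2)^{2/3} < P/A, where A = (a+b)/2, G = √(ab), L = (a-b)/(log a - log b), and P = (a-b)/(2·arcsin((a-b)/(a+b))). -/

import Mathlib

open Real


lemma pos_of_deriv (f f' : ℝ → ℝ) (hder : ∀ x, HasDerivAt f (f' x) x)
    (h0 : f 0 = 0) (hf' : ∀ x, 0 < x → 0 < f' x) {x : ℝ} (hx : 0 < x) : 0 < f x := by
  have hmono : StrictMonoOn f (Set.Ici 0) := by
    apply strictMonoOn_of_deriv_pos (convex_Ici 0)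
    · exact fun y _ => (hder y).continuousAt.continuousWithinAt
    · intro y hy
      rw [interior_Ici] at hy
      rw [(hder y).deriv]
      exact hf' y hy
  have := hmono (by simp : (0:ℝ) ∈ Set.Ici 0) (le_of_lt hx) hx
  rwa [h0] at this

lemma sinh_lt_mul_cosh {x : ℝ} (hx : 0 < x) : sinh x < x * cosh x := by
  have h0 := pos_of_deriv (fun x => x * cosh x - sinh x) (fun x => x * sinh x)
    (fun x => by
      have h := ((hasDerivAt_id x).mul (Real.hasDerivAt_cosh x)).sub (Real.hasDerivAt_sinh x)
      exact h.congr_deriv (by simp [id]))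
    (by simp)
    (fun x hx => mul_pos hx (by positivity)) hx
  have : (0:ℝ) < x * cosh x - sinh x := h0
  linarith

lemma one_add_sq_lt_cosh {x : ℝ} (hx : 0 < x) : 1 + x^2/2 < cosh x := by
  have h0 := pos_of_deriv (fun x => cosh x - 1 - x^2/2) (fun x => sinh x - x)
    (fun x => by
      have h := ((Real.hasDerivAt_cosh x).sub_const 1).sub
        ((hasDerivAt_pow 2 x).div_const 2)
      exact h.congr_deriv (by push_cast; ring))
    (by simp)
    (fun x hx => by show (0:ℝ) < sinh x - x; have := Real.self_lt_sinh_iff.mpr hx; linarith) hx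
  have : (0:ℝ) < cosh x - 1 - x^2/2 := h0
  linarith

lemma add_cube_lt_sinh {x : ℝ} (hx : 0 < x) : x + x^3/6 < sinh x := by
  have h0 := pos_of_deriv (fun x => sinh x - x - x^3/6) (fun x => cosh x - 1 - x^2/2)
    (fun x => by
      have h := ((Real.hasDerivAt_sinh x).sub (hasDerivAt_id x)).sub
        ((hasDerivAt_pow 3 x).div_const 6)
      exact h.congr_deriv (by simp [id]; ring))
    (by simp)
    (fun x hx => by show (0:ℝ) < cosh x - 1 - x^2/2; have := one_add_sq_lt_cosh hx; linarith) hx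
  have : (0:ℝ) < sinh x - x - x^3/6 := h0
  linarith

/-- Lazarević's inequality. -/
lemma lazarevic {x : ℝ} (hx : 0 < x) : x^3 * cosh x < sinh x ^ 3 := by
  have h0 := pos_of_deriv (fun x => sinh x ^ 3 - x^3 * cosh x)
    (fun x => 3 * sinh x ^ 2 * cosh x - 3*x^2 * cosh x - x^3 * sinh x)
    (fun x => by
      have h := (((Real.hasDerivAt_sinh x).pow 3).sub
        ((hasDerivAt_pow 3 x).mul (Real.hasDerivAt_cosh x)))
      exact h.congr_deriv (by push_cast; ring))
    (by simp)
    (fun x hx => by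
      show (0:ℝ) < 3 * sinh x ^ 2 * cosh x - 3*x^2 * cosh x - x^3 * sinh x
      have h1 := add_cube_lt_sinh hx
      have h2 := sinh_lt_mul_cosh hx
      have hcp : (0:ℝ) < cosh x := Real.cosh_pos x
      have hsp : (0:ℝ) < x + x^3/6 := by positivity
      have A : x^3 * sinh x < x^3 * (x * cosh x) :=
        mul_lt_mul_of_pos_left h2 (by positivity)
      have B : ((x + x^3/6) * (x + x^3/6)) * cosh x < (sinh x * sinh x) * cosh x :=
        mul_lt_mul_of_pos_right (mul_self_lt_mul_self hsp.le h1) hcp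
      nlinarith [mul_pos (pow_pos hx 6) hcp]) hx
  have : (0:ℝ) < sinh x ^ 3 - x^3 * cosh x := h0
  linarith

lemma pos_of_deriv' (f f' : ℝ → ℝ) (hder : ∀ x, HasDerivAt f (f' x) x)
    (h0 : f 0 = 0) (hf' : ∀ x, 0 < x → 0 < f' x) {x : ℝ} (hx : 0 < x) : 0 < f x := by
  have hmono : StrictMonoOn f (Set.Ici 0) := by
    apply strictMonoOn_of_deriv_pos (convex_Ici 0)
    · exact fun y _ => (hder y).continuousAt.continuousWithinAt
    · intro y hy
      rw [interior_Ici] at hy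
      rw [(hder y).deriv]
      exact hf' y hy
  have := hmono (by simp : (0:ℝ) ∈ Set.Ici 0) (le_of_lt hx) hx
  rwa [h0] at this

lemma sub_cube_lt_sin {x : ℝ} (hx : 0 < x) : x - x^3/6 < sin x := by
  have h0 := pos_of_deriv' (fun x => sin x - x + x^3/6) (fun x => cos x - 1 + x^2/2)
    (fun x => by
      have h := ((Real.hasDerivAt_sin x).sub (hasDerivAt_id x)).add
        ((hasDerivAt_pow 3 x).div_const 6)
      exact h.congr_deriv (by simp [id]; ring))
    (by simp)
    (fun x hx => by
      show (0:ℝ) < cos x - 1 + x^2/2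
      have := Real.one_sub_sq_div_two_lt_cos (ne_of_gt hx); linarith) hx
  have : (0:ℝ) < sin x - x + x^3/6 := h0
  linarith

lemma cos_lt_poly {x : ℝ} (hx : 0 < x) : cos x < 1 - x^2/2 + x^4/24 := by
  have h0 := pos_of_deriv' (fun x => 1 - x^2/2 + x^4/24 - cos x)
    (fun x => -x + x^3/6 + sin x)
    (fun x => by
      have h := (((hasDerivAt_const x (1:ℝ)).sub ((hasDerivAt_pow 2 x).div_const 2)).add
        ((hasDerivAt_pow 4 x).div_const 24)).sub (Real.hasDerivAt_cos x)
      exact h.congr_deriv (by push_cast; ring))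
    (by simp)
    (fun x hx => by
      show (0:ℝ) < -x + x^3/6 + sin x
      have := sub_cube_lt_sin hx; linarith) hx
  have : (0:ℝ) < 1 - x^2/2 + x^4/24 - cos x := h0
  linarith

/-- Mitrinović–Adamović inequality on (0,1). -/
lemma mitrinovic {x : ℝ} (hx : 0 < x) (hx1 : x < 1) : x^3 * cos x < sin x ^ 3 := by
  have h1 := sub_cube_lt_sin hx
  have h2 := cos_lt_poly hx
  have hsp : (0:ℝ) < x - x^3/6 := by nlinarith
  have h3 : (x - x^3/6)^3 < sin x ^ 3 := by
    have := mul_self_lt_mul_self hsp.le h1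
    nlinarith [mul_pos hsp (mul_pos hsp hsp)]
  nlinarith [pow_pos hx 3, pow_pos hx 4, pow_pos hx 6]

lemma lt_rpow_two_thirds {x y : ℝ} (hx : 0 ≤ x) (hy : 0 ≤ y) (h : x^3 < y^2) :
    x < y ^ ((2:ℝ)/3) := by
  have h1 : x = (x ^ (3:ℕ)) ^ ((1:ℝ)/3) := by
    rw [← Real.rpow_natCast x 3, ← Real.rpow_mul hx]; norm_num
  have h2 : y ^ ((2:ℝ)/3) = (y ^ (2:ℕ)) ^ ((1:ℝ)/3) := by
    rw [← Real.rpow_natCast y 2, ← Real.rpow_mul hy]; norm_num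
  calc x = (x ^ (3:ℕ)) ^ ((1:ℝ)/3) := h1
    _ < (y ^ (2:ℕ)) ^ ((1:ℝ)/3) := Real.rpow_lt_rpow (by positivity) (by exact_mod_cast h) (by norm_num)
    _ = y ^ ((2:ℝ)/3) := h2.symm

lemma rpow_two_thirds_lt {x y : ℝ} (hx : 0 ≤ x) (hy : 0 ≤ y) (h : x^2 < y^3) :
    x ^ ((2:ℝ)/3) < y := by
  have h1 : x ^ ((2:ℝ)/3) = (x ^ (2:ℕ)) ^ ((1:ℝ)/3) := by
    rw [← Real.rpow_natCast x 2, ← Real.rpow_mul hx]; norm_num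
  have h2 : y = (y ^ (3:ℕ)) ^ ((1:ℝ)/3) := by
    rw [← Real.rpow_natCast y 3, ← Real.rpow_mul hy]; norm_num
  calc x ^ ((2:ℝ)/3) = (x ^ (2:ℕ)) ^ ((1:ℝ)/3) := h1
    _ < (y ^ (3:ℕ)) ^ ((1:ℝ)/3) := Real.rpow_lt_rpow (by positivity) (by exact_mod_cast h) (by norm_num)
    _ = y := h2.symm


set_option maxHeartbeats 1000000 in
theorem sandor_main (a b : ℝ) (ha : 0 < a) (hb : 0 < b) (hba : b < a) :
    Real.sqrt (a * b) / ((a - b) / (Real.log a - Real.log b)) <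
      (2 / (1 + ((a + b) / 2) / Real.sqrt (a * b))) ^ ((2 : ℝ)/3) ∧
    (2 / (1 + ((a + b) / 2) / Real.sqrt (a * b))) ^ ((2 : ℝ)/3) <
      ((1 + Real.sqrt (a * b) / ((a + b) / 2)) / 2) ^ ((2 : ℝ)/3) ∧
    ((1 + Real.sqrt (a * b) / ((a + b) / 2)) / 2) ^ ((2 : ℝ)/3) <
      ((a - b) / (2 * arcsin ((a - b) / (a + b)))) / ((a + b) / 2) := by
  have hab : (0:ℝ) < a * b := by positivity
  have hg : 0 < Real.sqrt (a*b) := Real.sqrt_pos.mpr hab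
  have hg2 : Real.sqrt (a*b)^2 = a*b := Real.sq_sqrt hab.le
  have ht : 0 < Real.log a - Real.log b := by
    have := Real.log_lt_log hb hba; linarith
  have hgA : Real.sqrt (a*b) < (a+b)/2 := by
    nlinarith [sq_nonneg (Real.sqrt a - Real.sqrt b), Real.sq_sqrt ha.le, Real.sq_sqrt hb.le,
      Real.sqrt_mul ha.le b, Real.sqrt_nonneg a, Real.sqrt_nonneg b, sq_nonneg (a-b),
      Real.sqrt_pos.mpr ha, Real.sqrt_pos.mpr hb]
  -- hyperbolic parametrization
  obtain ⟨u, hudef, hu⟩ : ∃ u, u = (Real.log a - Real.log b)/4 ∧ 0 < u :=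
    ⟨_, rfl, by positivity⟩
  have h4u : Real.log a - Real.log b = 4*u := by rw [hudef]; ring
  have hr : (0:ℝ) < Real.sqrt (a/b) := Real.sqrt_pos.mpr (by positivity)
  have hlogr : Real.log (Real.sqrt (a/b)) = 2*u := by
    rw [Real.log_sqrt (by positivity), Real.log_div (ne_of_gt ha) (ne_of_gt hb), hudef]; ring
  have hgr : Real.sqrt (a*b) * Real.sqrt (a/b) = a := by
    rw [← Real.sqrt_mul hab.le, show a*b*(a/b) = a^2 by field_simp]
    exact Real.sqrt_sq ha.le
  have hgrinv : Real.sqrt (a*b) * (Real.sqrt (a/b))⁻¹ = b := by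
    rw [← Real.sqrt_inv, ← Real.sqrt_mul hab.le, show (a*b)*(a/b)⁻¹ = b^2 by field_simp]
    exact Real.sqrt_sq hb.le
  have hs : a - b = 2*Real.sqrt (a*b)*Real.sinh (2*u) := by
    rw [← hlogr, Real.sinh_log hr,
      show 2*Real.sqrt (a*b)*((Real.sqrt (a/b) - (Real.sqrt (a/b))⁻¹)/2)
        = Real.sqrt (a*b)*Real.sqrt (a/b) - Real.sqrt (a*b)*(Real.sqrt (a/b))⁻¹ from by ring,
      hgr, hgrinv]
  have hc : a + b = 2*Real.sqrt (a*b)*Real.cosh (2*u) := by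
    rw [← hlogr, Real.cosh_log hr,
      show 2*Real.sqrt (a*b)*((Real.sqrt (a/b) + (Real.sqrt (a/b))⁻¹)/2)
        = Real.sqrt (a*b)*Real.sqrt (a/b) + Real.sqrt (a*b)*(Real.sqrt (a/b))⁻¹ from by ring,
      hgr, hgrinv]
  have hS : 0 < Real.sinh u := (Real.sinh_pos_iff).mpr hu
  have hC : 0 < Real.cosh u := Real.cosh_pos u
  have h2s : Real.sinh (2*u) = 2*Real.sinh u*Real.cosh u := Real.sinh_two_mul u
  have h2c : Real.cosh (2*u) = 2*Real.cosh u^2 - 1 := by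
    rw [Real.cosh_two_mul u, Real.sinh_sq]; ring
  have eA : ((a+b)/2)/Real.sqrt (a*b) = Real.cosh (2*u) := by
    rw [hc]; field_simp
  have hA : 0 < (a+b)/2 := by positivity
  refine ⟨?_, ?_, ?_⟩
  · -- first inequality
    have hL : 0 < (a-b)/(Real.log a - Real.log b) := div_pos (by linarith) ht
    apply lt_rpow_two_thirds (le_of_lt (div_pos hg hL)) (by positivity)
    have eL : Real.sqrt (a*b) / ((a-b)/(Real.log a - Real.log b))
        = u/(Real.sinh u * Real.cosh u) := by
      rw [hs, h2s, h4u]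
      rw [div_eq_div_iff (by positivity) (ne_of_gt (mul_pos hS hC))]
      field_simp
      ring
    rw [eL, eA, h2c, show (1+(2*Real.cosh u^2-1)) = 2*Real.cosh u^2 from by ring]
    rw [div_pow, div_pow,
      div_lt_div_iff₀ (pow_pos (mul_pos hS hC) 3) (pow_pos (by positivity : (0:ℝ) < 2*Real.cosh u^2) 2)]
    nlinarith [mul_lt_mul_of_pos_right (lazarevic hu) (pow_pos hC 3), pow_pos hC 3, pow_pos hu 3]
  · -- second inequality
    apply Real.rpow_lt_rpow (by positivity) ?_ (by norm_num)
    have e1 : 1 + ((a+b)/2)/Real.sqrt (a*b) = ((a+b)/2 + Real.sqrt (a*b))/Real.sqrt (a*b) := by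
      field_simp
      ring
    have e2 : (1 + Real.sqrt (a*b)/((a+b)/2))/2 = ((a+b)/2 + Real.sqrt (a*b))/(a+b) := by
      rw [div_eq_div_iff (by norm_num) (by positivity)]
      field_simp
    rw [e1, e2, div_div_eq_mul_div, div_lt_div_iff₀ (by positivity) (by positivity)]
    nlinarith [sq_nonneg ((a+b)/2 - Real.sqrt (a*b))]
  · -- third inequality
    have hz0 : 0 < (a-b)/(a+b) := div_pos (by linarith) (by positivity)
    have hz1 : (a-b)/(a+b) < 1 := by rw [div_lt_one (by positivity)]; linarith
    have hθ0 : 0 < Real.arcsin ((a-b)/(a+b)) := Real.arcsin_pos.mpr hz0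
    have hθ2 : Real.arcsin ((a-b)/(a+b)) < π/2 := Real.arcsin_lt_pi_div_two.mpr hz1
    obtain ⟨θ, hθdef⟩ : ∃ θ, θ = Real.arcsin ((a-b)/(a+b)) := ⟨_, rfl⟩
    rw [← hθdef] at hθ0 hθ2
    have hsinθ : Real.sin θ = (a-b)/(a+b) := by
      rw [hθdef]; exact Real.sin_arcsin (by linarith) hz1.le
    have hcosθ : Real.cos θ = Real.sqrt (a*b)/((a+b)/2) := by
      rw [hθdef, Real.cos_arcsin]
      rw [show 1 - ((a-b)/(a+b))^2 = (Real.sqrt (a*b)/((a+b)/2))^2 from by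
        have hne : a + b ≠ 0 := by positivity
        field_simp
        ring_nf
        rw [Real.sq_sqrt hab.le]]
      exact Real.sqrt_sq (by positivity)
    have hw0 : 0 < θ/2 := by linarith
    have hw1 : θ/2 < 1 := by linarith [Real.pi_lt_d2]
    have hcw : 0 < Real.cos (θ/2) := by
      apply Real.cos_pos_of_mem_Ioo
      constructor
      · linarith [Real.pi_gt_three]
      · linarith [Real.pi_gt_three]
    have hsw : 0 < Real.sin (θ/2) := by
      apply Real.sin_pos_of_pos_of_lt_pi hw0
      linarith [Real.pi_gt_three]
    have hhalf : (1 + Real.sqrt (a*b)/((a+b)/2))/2 = Real.cos (θ/2) ^2 := by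
      rw [Real.cos_sq, show 2*(θ/2) = θ from by ring, hcosθ]; ring
    have eP : ((a-b)/(2*θ))/((a+b)/2) = Real.sin θ/θ := by
      have hθne : θ ≠ 0 := ne_of_gt hθ0
      have habne : a + b ≠ 0 := by positivity
      rw [hsinθ]
      field_simp
    rw [← hθdef, eP, hhalf]
    apply rpow_two_thirds_lt (by positivity)
      (le_of_lt (div_pos (by rw [hsinθ]; exact hz0) hθ0))
    have key : ∀ t : ℝ, 0 < t → t < 1 → 0 < Real.cos t →
        (Real.cos t^2)^2 < (Real.sin (2*t)/(2*t))^3 := by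
      intro t ht0 ht1 hct
      rw [Real.sin_two_mul, div_pow, lt_div_iff₀ (pow_pos (by linarith) 3)]
      nlinarith [mul_lt_mul_of_pos_right (mitrinovic ht0 ht1) (pow_pos hct 3), pow_pos hct 3]
    have := key (θ/2) hw0 hw1 hcw
    rwa [show 2*(θ/2) = θ from by ring] at this
theorem sandor_thm3b (a b : ℝ) (ha : 0 < a) (hb : 0 < b) (hab : a ≠ b) :
    Real.sqrt (a * b) / ((a - b) / (Real.log a - Real.log b)) <
      (2 / (1 + ((a + b) / 2) / Real.sqrt (a * b))) ^ ((2 : ℝ)/3) ∧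
    (2 / (1 + ((a + b) / 2) / Real.sqrt (a * b))) ^ ((2 : ℝ)/3) <
      ((1 + Real.sqrt (a * b) / ((a + b) / 2)) / 2) ^ ((2 : ℝ)/3) ∧
    ((1 + Real.sqrt (a * b) / ((a + b) / 2)) / 2) ^ ((2 : ℝ)/3) <
      ((a - b) / (2 * arcsin ((a - b) / (a + b)))) / ((a + b) / 2) := by
  rcases hab.lt_or_gt with h | h
  · have H := sandor_main b a hb ha h
    have E1 : Real.sqrt (b*a) = Real.sqrt (a*b) := by rw [mul_comm]
    have E2 : (b-a)/(Real.log b - Real.log a) = (a-b)/(Real.log a - Real.log b) := by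
      rw [← neg_sub a b, ← neg_sub (Real.log a) (Real.log b), neg_div_neg_eq]
    have E4 : (b-a)/(2*Real.arcsin ((b-a)/(b+a))) = (a-b)/(2*Real.arcsin ((a-b)/(a+b))) := by
      rw [show (b-a)/(b+a) = -((a-b)/(a+b)) from by
          rw [add_comm b a, ← neg_sub a b, neg_div],
        Real.arcsin_neg, mul_neg, ← neg_sub a b, neg_div_neg_eq]
    rw [E1, E2, E4, add_comm b a] at H
    exact H
  · exact sandor_main a b ha hb h
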